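/- arXiv:2306.09138 — 4 statements merged into one kernel-verified Lean document; each statement's English description precedes it below -/
import Mathlib

section
/- Theorem 4.4 (Brave semantics characterization): Let K be a finite set of axioms with a monotone entailment predicate ent for a query Q and a monotone inconsistency predicate inc (w ⊆ w', inc w implies inc w'); consistency of w means ¬inc w. Assume the TBox T ⊆ K is consistent and all worlds contain T. Then Q holds in at least one repair (Brave semantics) if and only if there exists a justification J for Q (minimal set with ent J) such that J ∪ T is consistent, i.e., ¬inc(J ∪ T). -/
/-- Theorem 4.4 (Brave semantics): Q holds in at least one repair iff there is a
justification J for Q such that J ∪ T is consistent. -/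
theorem brave_characterization {α : Type*} [DecidableEq α]
    (A T : Finset α)
    (ent : Finset α → Prop) (inc : Finset α → Prop)
    (hent : ∀ w w' : Finset α, w ⊆ w' → ent w → ent w')
    (hinc : ∀ w w' : Finset α, w ⊆ w' → inc w → inc w')
    (hT : ¬ inc T) :
    (∃ R : Finset α, R ⊆ A ∧ ¬ inc (R ∪ T) ∧
        (∀ R' : Finset α, R' ⊆ A → R ⊆ R' → ¬ inc (R' ∪ T) → R' = R) ∧
        ent (R ∪ T)) ↔
    (∃ J : Finset α, J ⊆ A ∪ T ∧ ent J ∧ (∀ J' ⊆ J, ent J' → J' = J) ∧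
        ¬ inc (J ∪ T)) := by
  classical
  constructor
  · rintro ⟨R, hRA, hRcons, _hRmax, hRent⟩
    -- take a minimal subset of R ∪ T entailing Q
    set C := (R ∪ T).powerset.filter ent with hC
    have hne : C.Nonempty := ⟨R ∪ T, Finset.mem_filter.mpr ⟨Finset.mem_powerset.mpr subset_rfl, hRent⟩⟩
    obtain ⟨J, hJC, hJmin⟩ := C.exists_min_image Finset.card hne
    simp only [hC, Finset.mem_filter, Finset.mem_powerset] at hJC
    refine ⟨J, hJC.1.trans (Finset.union_subset_union hRA subset_rfl), hJC.2, ?_, ?_⟩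
    · intro J' hJ' hentJ'
      have hJ'C : J' ∈ C := by
        simp only [hC, Finset.mem_filter, Finset.mem_powerset]
        exact ⟨hJ'.trans hJC.1, hentJ'⟩
      exact Finset.eq_of_subset_of_card_le hJ' (hJmin J' hJ'C)
    · intro h
      exact hRcons (hinc _ _ (Finset.union_subset_union hJC.1 subset_rfl |>.trans
        (by simp)) h)
  · rintro ⟨J, hJAT, hJent, _hJmin, hJcons⟩
    -- extend J ∩ A to a maximal consistent subset of A
    have hJsub : J ⊆ (J ∩ A) ∪ T := by
      intro x hx
      rcases Finset.mem_union.mp (hJAT hx) with h | h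
      · exact Finset.mem_union_left _ (Finset.mem_inter.mpr ⟨hx, h⟩)
      · exact Finset.mem_union_right _ h
    set C := A.powerset.filter (fun R => ¬ inc (R ∪ T) ∧ J ∩ A ⊆ R) with hC
    have hbase : J ∩ A ∈ C := by
      simp only [hC, Finset.mem_filter, Finset.mem_powerset]
      refine ⟨Finset.inter_subset_right, ?_, subset_rfl⟩
      intro h
      exact hJcons (hinc _ _ (Finset.union_subset_union Finset.inter_subset_left subset_rfl) h)
    obtain ⟨R, hRC, hRmax⟩ := C.exists_max_image Finset.card ⟨_, hbase⟩
    simp only [hC, Finset.mem_filter, Finset.mem_powerset] at hRC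
    obtain ⟨hRA, hRcons, hJR⟩ := hRC
    refine ⟨R, hRA, hRcons, ?_, ?_⟩
    · intro R' hR'A hRR' hR'cons
      have hR'C : R' ∈ C := by
        simp only [hC, Finset.mem_filter, Finset.mem_powerset]
        exact ⟨hR'A, hR'cons, hJR.trans hRR'⟩
      exact (Finset.eq_of_subset_of_card_le hRR' (hRmax R' hR'C)).symm
    · exact hent _ _ (hJsub.trans (Finset.union_subset_union hJR subset_rfl)) hJent
end

section
/- Theorem 4.9 (IAR semantics characterization): Let K = (A, T) with monotone entailment ent and downward-closed consistency. Let E be the set of all ABox axioms appearing in at least one justification for the inconsistency (minimal inconsistent subsets). Then Q holds in the intersection of all repairs together with T (IAR semantics), i.e., ent(D ∪ T) where D = ⋂_{R repair} R, if there exists a justification J for Q with J ∩ E = ∅ and J ⊆ A ∪ T. Conversely, if every justification for Q contains an axiom of E, then Q does not hold under IAR, provided each axiom of E is excluded from at least one repair. -/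
/-- Any set satisfying `P` contains a minimal subset satisfying `P`. -/
lemma exists_minimal_subset {α : Type*} [DecidableEq α] (P : Finset α → Prop) :
    ∀ S : Finset α, P S → ∃ M, M ⊆ S ∧ P M ∧ ∀ M' ⊆ M, P M' → M' = M := by
  intro S
  induction S using Finset.strongInductionOn with
  | _ S ih =>
    intro hS
    by_cases h : ∀ M' ⊆ S, P M' → M' = S
    · exact ⟨S, subset_rfl, hS, h⟩
    · push_neg at h
      obtain ⟨M', hsub, hP, hne⟩ := h
      obtain ⟨M, h1, h2, h3⟩ := ih M' (ssubset_of_subset_of_ne hsub hne) hP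
      exact ⟨M, h1.trans hsub, h2, h3⟩

/-- Theorem 4.9 (IAR semantics characterization). `Ec` is the set of ABox axioms occurring in
some minimal inconsistent subset of `A ∪ T`; `D` is the intersection of all repairs.
If Q has a justification disjoint from `Ec`, then Q holds under IAR; conversely, if every
justification for Q meets `Ec` and each axiom of `Ec` is excluded from some repair,
then Q does not hold under IAR. -/
theorem iar_characterization {α : Type*} [DecidableEq α]
    (A T : Finset α) (hAT : Disjoint A T)
    (ent : Finset α → Prop) (cons : Finset α → Prop)
    (hent : ∀ w w' : Finset α, w ⊆ w' → ent w → ent w')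
    (hanti : ∀ S S' : Finset α, S ⊆ S' → cons S' → cons S)
    (hT : cons T)
    (Ec : Finset α)
    (hEc : ∀ a, a ∈ Ec ↔ a ∈ A ∧ ∃ C : Finset α, C ⊆ A ∪ T ∧ ¬ cons C ∧
        (∀ C' ⊆ C, ¬ cons C' → C' = C) ∧ a ∈ C)
    (D : Finset α)
    (hD : ∀ a, a ∈ D ↔ a ∈ A ∧ ∀ R : Finset α, (R ⊆ A ∧ cons (R ∪ T) ∧
        ∀ R' : Finset α, R' ⊆ A → R ⊆ R' → cons (R' ∪ T) → R' = R) → a ∈ R) :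
    ((∃ J : Finset α, J ⊆ A ∪ T ∧ ent J ∧ (∀ J' ⊆ J, ent J' → J' = J) ∧
        J ∩ Ec = ∅) → ent (D ∪ T)) ∧
    (((∀ J : Finset α, J ⊆ A ∪ T → ent J → (∀ J' ⊆ J, ent J' → J' = J) →
        (J ∩ Ec).Nonempty) ∧
      (∀ a ∈ Ec, ∃ R : Finset α, (R ⊆ A ∧ cons (R ∪ T) ∧
        ∀ R' : Finset α, R' ⊆ A → R ⊆ R' → cons (R' ∪ T) → R' = R) ∧ a ∉ R)) →
      ¬ ent (D ∪ T)) := by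
  constructor
  · rintro ⟨J, hJAT, hJent, _, hJEc⟩
    apply hent J _ _ hJent
    intro x hxJ
    rcases Finset.mem_union.mp (hJAT hxJ) with hxA | hxT
    · -- x ∈ A, x ∉ Ec, show x ∈ D
      have hxEc : x ∉ Ec := by
        intro hx
        have : x ∈ J ∩ Ec := Finset.mem_inter.mpr ⟨hxJ, hx⟩
        rw [hJEc] at this
        exact absurd this (Finset.notMem_empty x)
      refine Finset.mem_union_left _ ((hD x).mpr ⟨hxA, ?_⟩)
      rintro R ⟨hRA, hRcons, hRmax⟩
      by_contra hxR
      -- insert x R ∪ T is inconsistent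
      have hinc : ¬ cons (insert x R ∪ T) := by
        intro hc
        have := hRmax (insert x R) (Finset.insert_subset hxA hRA)
          (Finset.subset_insert _ _) hc
        exact hxR (this ▸ Finset.mem_insert_self x R)
      obtain ⟨C, hCsub, hCinc, hCmin⟩ := exists_minimal_subset (fun s => ¬ cons s)
        (insert x R ∪ T) hinc
      apply hxEc
      rw [hEc]
      refine ⟨hxA, C, ?_, hCinc, hCmin, ?_⟩
      · intro y hy
        rcases Finset.mem_union.mp (hCsub hy) with h | h
        · rcases Finset.mem_insert.mp h with rfl | h
          · exact Finset.mem_union_left _ hxA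
          · exact Finset.mem_union_left _ (hRA h)
        · exact Finset.mem_union_right _ h
      · by_contra hxC
        apply hCinc
        apply hanti C (R ∪ T) _ hRcons
        intro y hy
        rcases Finset.mem_union.mp (hCsub hy) with h | h
        · rcases Finset.mem_insert.mp h with rfl | h
          · exact absurd hy hxC
          · exact Finset.mem_union_left _ h
        · exact Finset.mem_union_right _ h
    · exact Finset.mem_union_right _ hxT
  · rintro ⟨hall, hexc⟩ hDT
    obtain ⟨J, hJsub, hJent, hJmin⟩ := exists_minimal_subset ent (D ∪ T) hDT
    have hDA : D ⊆ A := fun a ha => ((hD a).mp ha).1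
    have hJAT : J ⊆ A ∪ T := hJsub.trans (Finset.union_subset_union hDA subset_rfl)
    obtain ⟨a, ha⟩ := hall J hJAT hJent hJmin
    rw [Finset.mem_inter] at ha
    obtain ⟨haJ, haEc⟩ := ha
    have haA : a ∈ A := ((hEc a).mp haEc).1
    have haD : a ∈ D := by
      rcases Finset.mem_union.mp (hJsub haJ) with h | h
      · exact h
      · exact absurd h (Finset.disjoint_left.mp hAT haA)
    obtain ⟨R, hR, haR⟩ := hexc a haEc
    exact haR (((hD a).mp haD).2 R hR)
end

section
/- In the setting of finite ABox A, TBox T, downward-closed consistency with cons T: an ABox axiom a ∈ A belongs to every repair of K = (A, T) if and only if a does not belong to any conflict (inclusion-minimal subset of A inconsistent with T). -/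
/-- An ABox axiom belongs to every repair iff it belongs to no conflict
(inclusion-minimal subset of A inconsistent with T). -/
theorem in_every_repair_iff_no_conflict {α : Type*} [DecidableEq α]
    (A T : Finset α) (cons : Finset α → Prop)
    (hanti : ∀ S S' : Finset α, S ⊆ S' → cons S' → cons S)
    (hT : cons T) (a : α) (ha : a ∈ A) :
    (∀ R : Finset α, (R ⊆ A ∧ cons (R ∪ T) ∧
        ∀ R' : Finset α, R' ⊆ A → R ⊆ R' → cons (R' ∪ T) → R' = R) → a ∈ R) ↔
    ¬ ∃ C : Finset α, C ⊆ A ∧ ¬ cons (C ∪ T) ∧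
        (∀ C' ⊆ C, ¬ cons (C' ∪ T) → C' = C) ∧ a ∈ C := by
  classical
  constructor
  · rintro h ⟨C, hCA, hCincons, hCmin, haC⟩
    have hconsE : cons ((C.erase a) ∪ T) := by
      by_contra hc
      have := hCmin (C.erase a) (Finset.erase_subset a C) hc
      exact (Finset.notMem_erase a C) (this.symm ▸ haC)
    set P := A.powerset.filter (fun S => C.erase a ⊆ S ∧ cons (S ∪ T)) with hP
    have hne : P.Nonempty := by
      refine ⟨C.erase a, ?_⟩
      simp only [hP, Finset.mem_filter, Finset.mem_powerset]
      exact ⟨(Finset.erase_subset a C).trans hCA, Finset.Subset.refl _, hconsE⟩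
    obtain ⟨R, hRP, hRmax⟩ := P.exists_max_image Finset.card hne
    simp only [hP, Finset.mem_filter, Finset.mem_powerset] at hRP
    obtain ⟨hRA, hER, hRcons⟩ := hRP
    have haR : a ∈ R := by
      refine h R ⟨hRA, hRcons, ?_⟩
      intro R' hR'A hRR' hR'cons
      have hR'P : R' ∈ P := by
        simp only [hP, Finset.mem_filter, Finset.mem_powerset]
        exact ⟨hR'A, hER.trans hRR', hR'cons⟩
      exact (Finset.eq_of_subset_of_card_le hRR' (hRmax R' hR'P)).symm
    have hCR : C ⊆ R := by
      intro x hx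
      by_cases hxa : x = a
      · exact hxa ▸ haR
      · exact hER (Finset.mem_erase.mpr ⟨hxa, hx⟩)
    exact hCincons (hanti _ _ (Finset.union_subset_union_left hCR) hRcons)
  · intro hno R ⟨hRA, hRcons, hRmax⟩
    by_contra haR
    have hins : ¬ cons (insert a R ∪ T) := by
      intro hc
      have := hRmax (insert a R) (Finset.insert_subset ha hRA)
        (Finset.subset_insert a R) hc
      exact haR (this ▸ Finset.mem_insert_self a R)
    set Q := (insert a R).powerset.filter (fun S => ¬ cons (S ∪ T)) with hQ
    have hne : Q.Nonempty := by
      refine ⟨insert a R, ?_⟩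
      simp only [hQ, Finset.mem_filter, Finset.mem_powerset]
      exact ⟨Finset.Subset.refl _, hins⟩
    obtain ⟨C, hCQ, hCmin⟩ := Q.exists_min_image Finset.card hne
    simp only [hQ, Finset.mem_filter, Finset.mem_powerset] at hCQ
    obtain ⟨hCsub, hCincons⟩ := hCQ
    have haC : a ∈ C := by
      by_contra haC
      have hCR : C ⊆ R := fun x hx =>
        (Finset.mem_insert.mp (hCsub hx)).resolve_left (fun h => haC (h ▸ hx))
      exact hCincons (hanti _ _ (Finset.union_subset_union_left hCR) hRcons)
    refine hno ⟨C, hCsub.trans (Finset.insert_subset ha hRA), hCincons, ?_, haC⟩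
    intro C' hC'C hC'incons
    have hC'Q : C' ∈ Q := by
      simp only [hQ, Finset.mem_filter, Finset.mem_powerset]
      exact ⟨hC'C.trans hCsub, hC'incons⟩
    exact Finset.eq_of_subset_of_card_le hC'C (hCmin C' hC'Q)
end

section
/- If the query Q holds exactly in the worlds containing a fixed justification J, and every world containing the conflict set C (disjoint from J) is inconsistent while all other worlds are consistent, and J ∩ C = ∅, then P_C(Q) = P(Q ∧ Cons)/P(Cons) = ∏_{e∈J} p(e), i.e., the conditional probability equals the unconditional probability of Q. -/
open Finset

private lemma weight_split {α : Type*} [DecidableEq α] (E J : Finset α) (p : α → ℝ)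
    (hJ : J ⊆ E) (w : Finset α) (hw : w ⊆ E) (hJw : J ⊆ w) :
    (∏ a ∈ w, p a) * ∏ a ∈ E \ w, (1 - p a)
      = (∏ e ∈ J, p e) * ((∏ a ∈ w \ J, p a) * ∏ a ∈ (E \ J) \ (w \ J), (1 - p a)) := by
  have h1 : (∏ a ∈ w, p a) = (∏ e ∈ J, p e) * ∏ a ∈ w \ J, p a := by
    rw [← Finset.prod_union (Finset.disjoint_sdiff), Finset.union_sdiff_of_subset hJw]
  have h2 : (E \ J) \ (w \ J) = E \ w := by
    ext x
    simp only [Finset.mem_sdiff]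
    constructor
    · rintro ⟨⟨hE, hnJ⟩, h⟩
      refine ⟨hE, fun hxw => h ⟨hxw, hnJ⟩⟩
    · rintro ⟨hE, hnw⟩
      exact ⟨⟨hE, fun hxJ => hnw (hJw hxJ)⟩, fun ⟨hxw, _⟩ => hnw hxw⟩
  rw [h1, h2]; ring

/-- Factor out the justification J from the numerator-style sum. -/
private lemma sum_filter_subset_factor {α : Type*} [DecidableEq α] (E J : Finset α) (p : α → ℝ)
    (hJ : J ⊆ E) (P : Finset α → Prop) [DecidablePred P]
    (hP : ∀ w, w ⊆ E → (P w ↔ P (w \ J))) :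
    (∑ w ∈ E.powerset.filter (fun w => J ⊆ w ∧ P w),
        ((∏ a ∈ w, p a) * ∏ a ∈ E \ w, (1 - p a)))
      = (∏ e ∈ J, p e) * ∑ t ∈ (E \ J).powerset.filter P,
          ((∏ a ∈ t, p a) * ∏ a ∈ (E \ J) \ t, (1 - p a)) := by
  rw [Finset.mul_sum]
  refine Finset.sum_nbij' (fun w => w \ J) (fun t => J ∪ t) ?_ ?_ ?_ ?_ ?_
  · intro w hw
    simp only [Finset.mem_filter, Finset.mem_powerset] at hw ⊢
    obtain ⟨hwE, hJw, hPw⟩ := hw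
    exact ⟨Finset.sdiff_subset_sdiff hwE le_rfl, (hP w hwE).mp hPw⟩
  · intro t ht
    simp only [Finset.mem_filter, Finset.mem_powerset] at ht ⊢
    obtain ⟨htE, hPt⟩ := ht
    have hdisj : Disjoint J t := Finset.disjoint_of_subset_right htE Finset.disjoint_sdiff
    have hu : (J ∪ t) \ J = t := by
      rw [Finset.union_sdiff_left, Finset.sdiff_eq_self_of_disjoint hdisj.symm]
    refine ⟨Finset.union_subset hJ (htE.trans Finset.sdiff_subset),
      Finset.subset_union_left, ?_⟩
    rw [hP _ (Finset.union_subset hJ (htE.trans Finset.sdiff_subset)), hu]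
    exact hPt
  · intro w hw
    simp only [Finset.mem_filter, Finset.mem_powerset] at hw
    exact Finset.union_sdiff_of_subset hw.2.1
  · intro t ht
    simp only [Finset.mem_filter, Finset.mem_powerset] at ht
    have hdisj : Disjoint J t := Finset.disjoint_of_subset_right ht.1 Finset.disjoint_sdiff
    show (J ∪ t) \ J = t
    rw [Finset.union_sdiff_left, Finset.sdiff_eq_self_of_disjoint hdisj.symm]
  · intro w hw
    simp only [Finset.mem_filter, Finset.mem_powerset] at hw
    exact weight_split E J p hJ w hw.1 hw.2.1

/-- The denominator-style sum factors as 1 times the reduced sum. -/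
private lemma sum_filter_factor {α : Type*} [DecidableEq α] (E J : Finset α) (p : α → ℝ)
    (hJ : J ⊆ E) (P : Finset α → Prop) [DecidablePred P]
    (hP : ∀ w, w ⊆ E → (P w ↔ P (w \ J))) :
    (∑ w ∈ E.powerset.filter (fun w => P w),
        ((∏ a ∈ w, p a) * ∏ a ∈ E \ w, (1 - p a)))
      = ∑ t ∈ (E \ J).powerset.filter P,
          ((∏ a ∈ t, p a) * ∏ a ∈ (E \ J) \ t, (1 - p a)) := by
  have key : (∑ w ∈ E.powerset.filter (fun w => P w),
        ((∏ a ∈ w, p a) * ∏ a ∈ E \ w, (1 - p a)))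
      = ∑ q ∈ J.powerset ×ˢ (E \ J).powerset.filter P,
          (((∏ a ∈ q.1, p a) * ∏ a ∈ J \ q.1, (1 - p a)) *
           ((∏ a ∈ q.2, p a) * ∏ a ∈ (E \ J) \ q.2, (1 - p a))) := by
    refine Finset.sum_nbij' (fun w => (w ∩ J, w \ J)) (fun q => q.1 ∪ q.2) ?_ ?_ ?_ ?_ ?_
    · intro w hw
      simp only [Finset.mem_filter, Finset.mem_powerset, Finset.mem_product] at hw ⊢
      exact ⟨Finset.inter_subset_right, Finset.sdiff_subset_sdiff hw.1 le_rfl,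
        (hP w hw.1).mp hw.2⟩
    · intro q hq
      simp only [Finset.mem_filter, Finset.mem_powerset, Finset.mem_product] at hq ⊢
      obtain ⟨h1, h2, hPq⟩ := hq
      have hsub : q.1 ∪ q.2 ⊆ E :=
        Finset.union_subset (h1.trans hJ) (h2.trans Finset.sdiff_subset)
      have hdisj : Disjoint q.1 q.2 :=
        Finset.disjoint_of_subset_left h1
          (Finset.disjoint_of_subset_right h2 (Finset.disjoint_sdiff))
      have hu : (q.1 ∪ q.2) \ J = q.2 := by
        rw [Finset.union_sdiff_distrib, Finset.sdiff_eq_empty_iff_subset.mpr h1,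
          Finset.sdiff_eq_self_of_disjoint
            (Finset.disjoint_of_subset_right h2 Finset.disjoint_sdiff).symm,
          Finset.empty_union]
      refine ⟨hsub, ?_⟩
      rw [hP _ hsub, hu]; exact hPq
    · intro w hw
      show w ∩ J ∪ w \ J = w
      ext x
      simp only [Finset.mem_union, Finset.mem_inter, Finset.mem_sdiff]
      tauto
    · intro q hq
      simp only [Finset.mem_filter, Finset.mem_powerset, Finset.mem_product] at hq
      obtain ⟨h1, h2, -⟩ := hq
      have hd2 : Disjoint q.2 J := Finset.disjoint_of_subset_left h2 Finset.sdiff_disjoint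
      have c1 : (q.1 ∪ q.2) ∩ J = q.1 := by
        rw [Finset.union_inter_distrib_right, Finset.inter_eq_left.mpr h1,
          (Finset.disjoint_iff_inter_eq_empty.mp hd2), Finset.union_empty]
      have c2 : (q.1 ∪ q.2) \ J = q.2 := by
        rw [Finset.union_sdiff_distrib, Finset.sdiff_eq_empty_iff_subset.mpr h1,
          Finset.sdiff_eq_self_of_disjoint hd2, Finset.empty_union]
      show ((q.1 ∪ q.2) ∩ J, (q.1 ∪ q.2) \ J) = q
      rw [c1, c2]
    · intro w hw
      simp only [Finset.mem_filter, Finset.mem_powerset] at hw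
      obtain ⟨hwE, hPw⟩ := hw
      have huw : w ∩ J ∪ w \ J = w := by
        ext x
        simp only [Finset.mem_union, Finset.mem_inter, Finset.mem_sdiff]
        tauto
      have hd : Disjoint (w ∩ J) (w \ J) := by
        rw [Finset.disjoint_left]
        intro a ha hb
        exact (Finset.mem_sdiff.mp hb).2 (Finset.mem_inter.mp ha).2
      have e1 : (∏ a ∈ w, p a) = (∏ a ∈ w ∩ J, p a) * ∏ a ∈ w \ J, p a := by
        conv_lhs => rw [← huw]
        exact Finset.prod_union hd
      have e2 : E \ w = (J \ (w ∩ J)) ∪ ((E \ J) \ (w \ J)) := by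
        ext x
        simp only [Finset.mem_sdiff, Finset.mem_union, Finset.mem_inter]
        constructor
        · rintro ⟨hE, hnw⟩
          by_cases hxJ : x ∈ J
          · exact Or.inl ⟨hxJ, fun ⟨h, _⟩ => hnw h⟩
          · exact Or.inr ⟨⟨hE, hxJ⟩, fun ⟨h, _⟩ => hnw h⟩
        · rintro (⟨hxJ, h⟩ | ⟨⟨hE, hnJ⟩, h⟩)
          · exact ⟨hJ hxJ, fun hxw => h ⟨hxw, hxJ⟩⟩
          · exact ⟨hE, fun hxw => h ⟨hxw, hnJ⟩⟩
      have e3 : (∏ a ∈ E \ w, (1 - p a))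
          = (∏ a ∈ J \ (w ∩ J), (1 - p a)) * ∏ a ∈ (E \ J) \ (w \ J), (1 - p a) := by
        rw [e2, Finset.prod_union]
        exact Finset.disjoint_of_subset_left Finset.sdiff_subset
          (Finset.disjoint_of_subset_right Finset.sdiff_subset Finset.disjoint_sdiff)
      rw [e1, e3]; ring
  rw [key, Finset.sum_product]
  dsimp only
  rw [← Finset.sum_mul_sum]
  have hone : (∑ s ∈ J.powerset, (∏ a ∈ s, p a) * ∏ a ∈ J \ s, (1 - p a)) = 1 := by
    rw [← Finset.prod_add]
    simp
  rw [hone, one_mul]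

/-- If Q holds exactly in worlds containing justification J, inconsistency holds exactly in
worlds containing conflict C, and J, C are disjoint, then P_C(Q) = ∏_{e∈J} p e = P(Q). -/
theorem conditional_eq_prod_of_disjoint_conflict {α : Type*} [DecidableEq α]
    (E : Finset α) (p : α → ℝ) (hp : ∀ e ∈ E, 0 ≤ p e ∧ p e ≤ 1)
    (J C : Finset α) (hJ : J ⊆ E) (hC : C ⊆ E) (hJC : Disjoint J C)
    (hpos : 0 < ∑ w ∈ E.powerset.filter (fun w => ¬ C ⊆ w),
        ((∏ a ∈ w, p a) * ∏ a ∈ E \ w, (1 - p a))) :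
    (∑ w ∈ E.powerset.filter (fun w => J ⊆ w ∧ ¬ C ⊆ w),
        ((∏ a ∈ w, p a) * ∏ a ∈ E \ w, (1 - p a))) /
      (∑ w ∈ E.powerset.filter (fun w => ¬ C ⊆ w),
        ((∏ a ∈ w, p a) * ∏ a ∈ E \ w, (1 - p a)))
    = ∏ e ∈ J, p e := by
  have hP : ∀ w : Finset α, w ⊆ E → ((¬ C ⊆ w) ↔ (¬ C ⊆ w \ J)) := by
    intro w _
    constructor
    · intro h hsub
      exact h (hsub.trans Finset.sdiff_subset)
    · intro h hsub
      refine h fun x hx => Finset.mem_sdiff.mpr ⟨hsub hx, fun hxJ => ?_⟩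
      exact (Finset.disjoint_left.mp hJC) hxJ hx
  rw [sum_filter_subset_factor E J p hJ _ hP, sum_filter_factor E J p hJ _ hP]
  have hne : (∑ t ∈ (E \ J).powerset.filter (fun w => ¬ C ⊆ w),
      ((∏ a ∈ t, p a) * ∏ a ∈ (E \ J) \ t, (1 - p a))) ≠ 0 := by
    rw [← sum_filter_factor E J p hJ _ hP]
    exact ne_of_gt hpos
  field_simp
end
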